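/- Let G be a simple graph with minimum degree at least two in which no connected component is a cycle (equivalently, every connected component contains a vertex of degree at least three). Then every vertex of G lies on some maximal path of G; that is, the maximal paths of G cover all vertices of G. -/

import Mathlib

/-- The degree of a vertex (number of neighbors). -/
noncomputable def deg {V : Type*} (G : SimpleGraph V) (w : V) : ℕ :=
  (G.neighborSet w).ncard

/-- A maximal path: a path on at least two vertices (at least one edge) all of whose inner
vertices have degree exactly two in G, whose endpoints each have degree at least three or
exactly two in G but not both degree two, and which cannot be extended at a degree-two
endpoint. -/
def IsMaximalPath {V : Type*} (G : SimpleGraph V) {u v : V} (p : G.Walk u v) : Prop :=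
  p.IsPath ∧ 1 ≤ p.length ∧
  (∀ w ∈ p.support, w ≠ u → w ≠ v → deg G w = 2) ∧
  ((3 ≤ deg G u ∧ 3 ≤ deg G v) ∨ (3 ≤ deg G u ∧ deg G v = 2) ∨
    (deg G u = 2 ∧ 3 ≤ deg G v)) ∧
  (deg G u = 2 → ∀ x : V, G.Adj u x → x ∈ p.support) ∧
  (deg G v = 2 → ∀ x : V, G.Adj v x → x ∈ p.support)

/-- The set of maximal paths of G, where each (undirected) maximal path is represented by
its set of edges. -/
def maximalPathEdgeSets {V : Type*} (G : SimpleGraph V) : Set (Set (Sym2 V)) :=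
  {s | ∃ (u v : V) (p : G.Walk u v), IsMaximalPath G p ∧ s = {e | e ∈ p.edges}}

open SimpleGraph

lemma exists_nbr {V : Type*} [Fintype V] {G : SimpleGraph V} {w : V} (h : 2 ≤ deg G w) :
    ∃ x, G.Adj w x := by
  have : (G.neighborSet w).Nonempty := by
    apply Set.nonempty_of_ncard_ne_zero; unfold deg at h; omega
  exact this

lemma nbr_cases {V : Type*} [Fintype V] {G : SimpleGraph V} {y a b : V}
    (hd : deg G y = 2) (ha : G.Adj y a) (hb : G.Adj y b) (hab : a ≠ b) :
    ∀ z, G.Adj y z → z = a ∨ z = b := by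
  have hsub : ({a, b} : Set V) ⊆ G.neighborSet y := by
    intro z hz; rcases hz with rfl | rfl; exact ha; exact hb
  have heq : ({a, b} : Set V) = G.neighborSet y := by
    apply Set.eq_of_subset_of_ncard_le hsub
    rw [Set.ncard_pair hab]; unfold deg at hd; omega
  intro z hz
  have : z ∈ ({a, b} : Set V) := heq ▸ hz
  simpa using this

lemma inner_two_nbrs {V : Type*} {G : SimpleGraph V} :
    ∀ {u v : V} (p : G.Walk u v), p.IsPath → ∀ y ∈ p.support, y ≠ u → y ≠ v →
    ∃ a b, a ≠ b ∧ G.Adj y a ∧ G.Adj y b ∧ a ∈ p.support ∧ b ∈ p.support := by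
  intro u v p
  induction p with
  | nil => intro _ y hy hyu _; simp at hy; exact absurd hy hyu
  | @cons u u' v h q ih =>
    intro hp y hy hyu hyv
    rw [SimpleGraph.Walk.support_cons, List.mem_cons] at hy
    rcases hy with rfl | hyq
    · exact absurd rfl hyu
    have hq : q.IsPath := hp.of_cons
    have hu_not : u ∉ q.support := (SimpleGraph.Walk.cons_isPath_iff _ _).mp hp |>.2
    by_cases hyu' : y = u'
    · subst hyu'
      cases q with
      | nil => simp at hyv
      | @cons _ u'' _ h' q' =>
        refine ⟨u, u'', ?_, h.symm, h', by simp, by simp⟩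
        intro huu''
        apply hu_not; rw [huu'']; simp
    · obtain ⟨a, b, hab, ha, hb, has, hbs⟩ := ih hq y hyq hyu' hyv
      exact ⟨a, b, hab, ha, hb, by simp [has], by simp [hbs]⟩

lemma reach_closed {V : Type*} {G : SimpleGraph V} {S : Set V}
    (hS : ∀ y ∈ S, ∀ z, G.Adj y z → z ∈ S) {u x : V} (hu : u ∈ S)
    (hr : G.Reachable u x) : x ∈ S := by
  obtain ⟨p⟩ := hr
  induction p with
  | nil => exact hu
  | @cons a b c h q ih => exact ih (hS a hu b h)

lemma extend {V : Type*} [Fintype V] (G : SimpleGraph V) (hmin : ∀ w : V, 2 ≤ deg G w) :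
    ∀ (n : ℕ) (u v : V) (p : G.Walk u v), Fintype.card V - p.support.length ≤ n →
    p.IsPath → 1 ≤ p.length →
    (∀ w ∈ p.support, w ≠ u → w ≠ v → deg G w = 2) →
    ∃ (b : V) (q : G.Walk u b), q.IsPath ∧ 1 ≤ q.length ∧
      (∀ w ∈ q.support, w ≠ u → w ≠ b → deg G w = 2) ∧
      (∀ y ∈ p.support, y ∈ q.support) ∧
      (3 ≤ deg G b ∨ (deg G b = 2 ∧ ∀ x, G.Adj b x → x ∈ q.support)) := by
  intro n
  induction n with
  | zero =>
    intro u v p hcard hp hl hinner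
    by_cases hv3 : 3 ≤ deg G v
    · exact ⟨v, p, hp, hl, hinner, fun y hy => hy, Or.inl hv3⟩
    have hv2 : deg G v = 2 := by have := hmin v; omega
    refine ⟨v, p, hp, hl, hinner, fun y hy => hy, Or.inr ⟨hv2, ?_⟩⟩
    classical
    intro x hx
    -- support has length ≥ card V and is nodup, so contains everything
    have hnd := hp.support_nodup
    have h1 : p.support.toFinset.card = p.support.length := List.toFinset_card_of_nodup hnd
    have h2 : p.support.toFinset.card ≤ Fintype.card V := Finset.card_le_univ _
    have h3 : p.support.toFinset = Finset.univ := by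
      apply Finset.eq_univ_of_card; omega
    have : x ∈ p.support.toFinset := h3 ▸ Finset.mem_univ x
    simpa using this
  | succ n ih =>
    intro u v p hcard hp hl hinner
    by_cases hv3 : 3 ≤ deg G v
    · exact ⟨v, p, hp, hl, hinner, fun y hy => hy, Or.inl hv3⟩
    have hv2 : deg G v = 2 := by have := hmin v; omega
    by_cases hall : ∀ x, G.Adj v x → x ∈ p.support
    · exact ⟨v, p, hp, hl, hinner, fun y hy => hy, Or.inr ⟨hv2, hall⟩⟩
    push_neg at hall
    obtain ⟨x, hvx, hxns⟩ := hall
    set q0 : G.Walk u x := p.concat hvx with hq0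
    have hq0supp : q0.support = p.support.concat x := by
      rw [List.concat_eq_append]; exact SimpleGraph.Walk.support_concat p hvx
    have hq0path : q0.IsPath := by
      rw [SimpleGraph.Walk.isPath_def, hq0supp, List.concat_eq_append]
      simp [List.nodup_append, hp.support_nodup]
      intro h hh heq; exact hxns (heq ▸ hh)
    have hq0inner : ∀ w ∈ q0.support, w ≠ u → w ≠ x → deg G w = 2 := by
      intro w hw hwu hwx
      rw [hq0supp, List.concat_eq_append, List.mem_append] at hw
      rcases hw with hw | hw
      · by_cases hwv : w = v
        · subst hwv; exact hv2
        · exact hinner w hw hwu hwv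
      · simp at hw; exact absurd hw hwx
    have hlen : q0.support.length = p.support.length + 1 := by
      rw [hq0supp, List.length_concat]
    obtain ⟨b, q, h1, h2, h3, h4, h5⟩ := ih u x q0 (by omega) hq0path
      (by rw [hq0, SimpleGraph.Walk.length_concat]; omega) hq0inner
    refine ⟨b, q, h1, h2, h3, ?_, h5⟩
    intro y hy
    apply h4
    rw [hq0supp, List.concat_eq_append]; simp [hy]


/-- In a graph with minimum degree at least two in which every connected component
contains a vertex of degree at least three, every vertex lies on some maximal path. -/
theorem maximalPaths_cover {V : Type*} [Fintype V] (G : SimpleGraph V)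
    (hmin : ∀ w : V, 2 ≤ deg G w)
    (hnocycle : ∀ w : V, ∃ x : V, G.Reachable w x ∧ 3 ≤ deg G x) :
    ∀ w : V, ∃ (a b : V) (p : G.Walk a b), IsMaximalPath G p ∧ w ∈ p.support := by
  intro w
  classical
  obtain ⟨x, hwx⟩ := exists_nbr (hmin w)
  set p0 : G.Walk w x := SimpleGraph.Walk.cons hwx SimpleGraph.Walk.nil with hp0def
  have hp0 : p0.IsPath := by
    rw [hp0def]; simp [hwx.ne]
  have hl0 : 1 ≤ p0.length := by rw [hp0def]; simp
  have hinner0 : ∀ y ∈ p0.support, y ≠ w → y ≠ x → deg G y = 2 := by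
    intro y hy hyw hyx
    rw [hp0def] at hy; simp at hy
    rcases hy with rfl | rfl
    · exact absurd rfl hyw
    · exact absurd rfl hyx
  obtain ⟨b, q, hq, hql, hqinner, hqsub, hqend⟩ :=
    extend G hmin (Fintype.card V) w x p0 (Nat.sub_le _ _) hp0 hl0 hinner0
  have hwq : w ∈ q.support := hqsub w (by rw [hp0def]; simp)
  by_cases hw3 : 3 ≤ deg G w
  · refine ⟨w, b, q, ⟨hq, hql, hqinner, ?_, ?_, ?_⟩, hwq⟩
    · rcases hqend with h | ⟨h2, _⟩
      · exact Or.inl ⟨hw3, h⟩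
      · exact Or.inr (Or.inl ⟨hw3, h2⟩)
    · intro h; omega
    · intro h2 z hz
      rcases hqend with h3 | ⟨_, hcl⟩
      · omega
      · exact hcl z hz
  · have hw2 : deg G w = 2 := by have := hmin w; omega
    have hrevinner : ∀ y ∈ q.reverse.support, y ≠ b → y ≠ w → deg G y = 2 := by
      intro y hy hyb hyw
      exact hqinner y (by simpa using hy) hyw hyb
    obtain ⟨c, r, hr, hrl, hrinner, hrsub, hrend⟩ :=
      extend G hmin (Fintype.card V) b w q.reverse (Nat.sub_le _ _) hq.reverse
        (by simpa using hql) hrevinner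
    have hwr : w ∈ r.support := hrsub w (by simp [hwq])
    have hqr : ∀ y ∈ q.support, y ∈ r.support := by
      intro y hy; exact hrsub y (by simpa using hy)
    have hbend : 3 ≤ deg G b ∨ (deg G b = 2 ∧ ∀ z, G.Adj b z → z ∈ r.support) := by
      rcases hqend with h | ⟨h2, hcl⟩
      · exact Or.inl h
      · exact Or.inr ⟨h2, fun z hz => hqr z (hcl z hz)⟩
    have hbr : b ∈ r.support := SimpleGraph.Walk.start_mem_support r
    rcases hbend with hb3 | ⟨hb2, hbcl⟩ <;> rcases hrend with hc3 | ⟨hc2, hccl⟩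
    · exact ⟨b, c, r, ⟨hr, hrl, hrinner, Or.inl ⟨hb3, hc3⟩,
        fun h => absurd h (by omega), fun h => absurd h (by omega)⟩, hwr⟩
    · exact ⟨b, c, r, ⟨hr, hrl, hrinner, Or.inr (Or.inl ⟨hb3, hc2⟩),
        fun h => absurd h (by omega), fun _ => hccl⟩, hwr⟩
    · exact ⟨b, c, r, ⟨hr, hrl, hrinner, Or.inr (Or.inr ⟨hb2, hc3⟩),
        fun _ => hbcl, fun h => absurd h (by omega)⟩, hwr⟩
    · -- contradiction: component of b is all degree ≤ 2
      exfalso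
      set S : Set V := {y | y ∈ r.support} with hSdef
      have hSclosed : ∀ y ∈ S, ∀ z, G.Adj y z → z ∈ S := by
        intro y hy z hz
        by_cases hyb : y = b
        · subst hyb; exact hbcl z hz
        by_cases hyc : y = c
        · subst hyc; exact hccl z hz
        obtain ⟨a1, a2, ha12, ha1, ha2, ha1s, ha2s⟩ := inner_two_nbrs r hr y hy hyb hyc
        rcases nbr_cases (hrinner y hy hyb hyc) ha1 ha2 ha12 z hz with rfl | rfl
        · exact ha1s
        · exact ha2s
      obtain ⟨t, hrt, ht3⟩ := hnocycle b
      have hts : t ∈ S := reach_closed hSclosed hbr hrt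
      by_cases htb : t = b
      · subst htb; omega
      by_cases htc : t = c
      · subst htc; omega
      have := hrinner t hts htb htc
      omega
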